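/- Define the D-GMSR conjunction key function h∧(y) := (M_{0,w}^ε(|y|_+^2))^{1/2} − (M_{p,w}^ε(|y|_-^2))^{1/2}. Then h∧(y) < 0 if and only if min_i y_i < 0. -/
import Mathlib


open Finset Real Filter Topology

noncomputable def M0 {n : ℕ} (ε : ℝ) (w : Fin n → ℕ) (z : Fin n → ℝ) : ℝ :=
  (ε ^ (∑ i, w i) + ∏ i, z i ^ w i) ^ ((1 : ℝ) / (∑ i, w i))

noncomputable def Mp {n : ℕ} (ε : ℝ) (p : ℕ) (w : Fin n → ℕ) (z : Fin n → ℝ) : ℝ :=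
  (ε ^ p + (1 / (∑ i, (w i : ℝ))) * ∑ i, (w i : ℝ) * z i ^ p) ^ ((1 : ℝ) / p)

noncomputable def posSq {n : ℕ} (y : Fin n → ℝ) : Fin n → ℝ := fun i => max (y i) 0 ^ 2

noncomputable def negSq {n : ℕ} (y : Fin n → ℝ) : Fin n → ℝ := fun i => min (y i) 0 ^ 2

noncomputable def hConj {n : ℕ} (ε : ℝ) (p : ℕ) (w : Fin n → ℕ) (y : Fin n → ℝ) : ℝ :=
  M0 ε w (posSq y) ^ ((1 : ℝ) / 2) - Mp ε p w (negSq y) ^ ((1 : ℝ) / 2)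

noncomputable def hDisj {n : ℕ} (ε : ℝ) (p : ℕ) (w : Fin n → ℕ) (y : Fin n → ℝ) : ℝ :=
  - hConj ε p w (fun i => - y i)

lemma pow_rpow_inv_self {x : ℝ} (hx : 0 < x) {k : ℕ} (hk : 0 < k) :
    ((x ^ k : ℝ)) ^ ((1 : ℝ) / k) = x := by
  rw [← Real.rpow_natCast x k, ← Real.rpow_mul hx.le, mul_one_div,
    div_self (by exact_mod_cast hk.ne'), Real.rpow_one]

theorem hConj_neg_iff_min_neg {n : ℕ} (hn : 0 < n) (ε : ℝ) (hε : 0 < ε)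
    (p : ℕ) (hp : 0 < p) (w : Fin n → ℕ) (hw : ∀ i, 0 < w i) (y : Fin n → ℝ) :
    hConj ε p w y < 0 ↔
      Finset.univ.inf' (Finset.univ_nonempty_iff.mpr ⟨⟨0, hn⟩⟩) y < 0 := by
  have hS : 0 < ∑ i, w i := by
    have : (⟨0, hn⟩ : Fin n) ∈ Finset.univ := Finset.mem_univ _
    exact Finset.sum_pos (fun i _ => hw i) ⟨⟨0, hn⟩, this⟩
  rw [Finset.inf'_lt_iff]
  constructor
  · -- contrapositive: if all y i ≥ 0 then hConj ≥ 0
    intro h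
    by_contra hc
    push_neg at hc
    have hy : ∀ i, 0 ≤ y i := fun i => hc i (Finset.mem_univ i)
    have hMp : Mp ε p w (negSq y) = ε := by
      unfold Mp negSq
      have : ∀ i, min (y i) 0 = 0 := fun i => min_eq_right (hy i)
      simp only [this]
      simp only [zero_pow (two_ne_zero), zero_pow hp.ne', mul_zero,
        Finset.sum_const_zero, add_zero]
      exact pow_rpow_inv_self hε hp
    have hM0 : ε ≤ M0 ε w (posSq y) := by
      unfold M0
      calc ε = (ε ^ (∑ i, w i)) ^ ((1:ℝ) / (∑ i, w i)) := (pow_rpow_inv_self hε hS).symm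
        _ ≤ _ := by
            apply Real.rpow_le_rpow (by positivity)
            · have : 0 ≤ ∏ i, posSq y i ^ w i := by
                apply Finset.prod_nonneg
                intro i _
                simp only [posSq]
                positivity
              linarith [pow_pos hε (∑ i, w i)]
            · exact div_nonneg zero_le_one (Nat.cast_nonneg _)
    have : (0:ℝ) ≤ hConj ε p w y := by
      unfold hConj
      rw [hMp]
      have := Real.rpow_le_rpow hε.le hM0 (by norm_num : (0:ℝ) ≤ 1/2)
      linarith
    linarith
  · rintro ⟨i, -, hi⟩
    have hM0 : M0 ε w (posSq y) = ε := by
      unfold M0 posSq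
      have : ∏ j, (max (y j) 0 ^ 2) ^ w j = 0 := by
        apply Finset.prod_eq_zero (Finset.mem_univ i)
        rw [max_eq_right hi.le, zero_pow (by norm_num), zero_pow (hw i).ne']
      rw [this, add_zero]
      exact pow_rpow_inv_self hε hS
    have hMp : ε < Mp ε p w (negSq y) := by
      unfold Mp negSq
      have hSpos : (0:ℝ) < ∑ j, (w j : ℝ) := by
        exact_mod_cast hS
      have hsum : 0 < ∑ j, (w j : ℝ) * (min (y j) 0 ^ 2) ^ p := by
        apply Finset.sum_pos' (fun j _ => by positivity)
        refine ⟨i, Finset.mem_univ i, ?_⟩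
        have : min (y i) 0 = y i := min_eq_left hi.le
        rw [this]
        have h2 : 0 < y i ^ 2 := by
          have := hi.ne
          positivity
        exact mul_pos (by exact_mod_cast hw i) (pow_pos h2 p)
      calc ε = (ε ^ p) ^ ((1:ℝ)/p) := (pow_rpow_inv_self hε hp).symm
        _ < _ := by
            apply Real.rpow_lt_rpow (pow_pos hε p).le
            · have h1 : 0 < (1 / (∑ j, (w j : ℝ))) * ∑ j, (w j : ℝ) * (min (y j) 0 ^ 2) ^ p :=
                mul_pos (one_div_pos.mpr hSpos) hsum
              linarith
            · exact div_pos one_pos (by exact_mod_cast hp)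
    unfold hConj
    rw [hM0]
    have := Real.rpow_lt_rpow hε.le hMp (by norm_num : (0:ℝ) < 1/2)
    linarith
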